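/- arXiv:2602.20504 — 2 statements merged into one kernel-verified Lean document; each statement's English description precedes it below -/
import Mathlib

section
/- Let G = (V,E) be a finite simple connected graph of order n ≥ 2. Then the vertex cover number of the splitting graph S(G) equals n − β₀*(G), i.e., α₀(S(G)) = n − β₀*(G). -/
/-- A finset `S` is independent in `G` if no two of its vertices are adjacent. -/
def IsIndepFinset {V : Type*} (G : SimpleGraph V) (S : Finset V) : Prop :=
  ∀ u ∈ S, ∀ v ∈ S, ¬ G.Adj u v

open Classical in
/-- The neighborhood `N(S)` of a finset `S` in `G`: all vertices adjacent to some vertex of `S`. -/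
noncomputable def nbhdSet {V : Type*} [Fintype V] (G : SimpleGraph V) (S : Finset V) : Finset V :=
  Finset.univ.filter fun v => ∃ u ∈ S, G.Adj u v

/-- The independence number `β₀(G)`: maximum size of an independent set. -/
noncomputable def indepNum {V : Type*} [Fintype V] (G : SimpleGraph V) : ℕ :=
  sSup {k : ℕ | ∃ S : Finset V, IsIndepFinset G S ∧ S.card = k}

/-- A finset `C` is a vertex cover of `G` if it meets every edge. -/
def IsVertexCover {V : Type*} (G : SimpleGraph V) (C : Finset V) : Prop :=
  ∀ u v, G.Adj u v → u ∈ C ∨ v ∈ C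

/-- The vertex cover number `α₀(G)`: minimum size of a vertex cover. -/
noncomputable def coverNum {V : Type*} [Fintype V] (G : SimpleGraph V) : ℕ :=
  sInf {k : ℕ | ∃ C : Finset V, IsVertexCover G C ∧ C.card = k}

/-- `β₀*(G) = max {|S| - |N(S)| : S independent in G}`. -/
noncomputable def betaStar {V : Type*} [Fintype V] (G : SimpleGraph V) : ℤ :=
  sSup {k : ℤ | ∃ S : Finset V,
    IsIndepFinset G S ∧ k = (S.card : ℤ) - ((nbhdSet G S).card : ℤ)}

/-- The splitting graph `S(G)`: vertex set `V ⊔ V'`, with the edges of `G` together with an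
edge between the copy `v'` of `v` and `u` for every edge `vu` of `G`. -/
def splittingGraph {V : Type*} (G : SimpleGraph V) : SimpleGraph (V ⊕ V) where
  Adj x y :=
    match x, y with
    | Sum.inl a, Sum.inl b => G.Adj a b
    | Sum.inl a, Sum.inr b => G.Adj a b
    | Sum.inr a, Sum.inl b => G.Adj a b
    | Sum.inr _, Sum.inr _ => False
  symm := by
    constructor
    rintro (a | a) (b | b) h
    · exact G.symm.symm _ _ h
    · exact G.symm.symm _ _ h
    · exact G.symm.symm _ _ h
    · exact h
  loopless := by
    constructor
    rintro (a | a) h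
    · exact G.loopless.irrefl a h
    · exact h

theorem stmt2 {V : Type*} [Fintype V] (G : SimpleGraph V)
    (hconn : G.Connected) (hn : 2 ≤ Fintype.card V) :
    (coverNum (splittingGraph G) : ℤ) = (Fintype.card V : ℤ) - betaStar G := by
  classical
  set n := Fintype.card V with hn'
  set K : Set ℤ := {k : ℤ | ∃ S : Finset V,
    IsIndepFinset G S ∧ k = (S.card : ℤ) - ((nbhdSet G S).card : ℤ)} with hK
  have hbeta : betaStar G = sSup K := rfl
  have hfin : K.Finite := by
    apply Set.Finite.subset
      (Set.finite_range (fun S : Finset V => (S.card : ℤ) - ((nbhdSet G S).card : ℤ)))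
    rintro k ⟨S, -, rfl⟩
    exact ⟨S, rfl⟩
  have hne : K.Nonempty := by
    refine ⟨0, ∅, ?_, ?_⟩
    · intro u hu; simp at hu
    · have : nbhdSet G (∅ : Finset V) = ∅ := by
        ext v; simp [nbhdSet]
      simp [this]
  have hmem : sSup K ∈ K := hne.csSup_mem hfin
  obtain ⟨S₀, hS₀ind, hS₀eq⟩ := hmem
  -- upper bound: build a cover
  have hS₀card : S₀.card ≤ n := Finset.card_le_card (Finset.subset_univ S₀)
  set C₀ : Finset (V ⊕ V) :=
    (Finset.univ \ S₀).map ⟨Sum.inl, Sum.inl_injective⟩ ∪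
      (nbhdSet G S₀).map ⟨Sum.inr, Sum.inr_injective⟩ with hC₀
  have hC₀cover : IsVertexCover (splittingGraph G) C₀ := by
    rintro (u | u) (v | v) hadj
    · -- both left: u,v can't both be in S₀
      by_cases hu : u ∈ S₀
      · by_cases hv : v ∈ S₀
        · exact absurd hadj (hS₀ind u hu v hv)
        · right; simp [hC₀, hv]
      · left; simp [hC₀, hu]
    · by_cases hu : u ∈ S₀
      · right
        refine Finset.mem_union_right _ ?_
        simp only [Finset.mem_map, Function.Embedding.coeFn_mk]
        refine ⟨v, ?_, rfl⟩
        simp only [nbhdSet, Finset.mem_filter, Finset.mem_univ, true_and]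
        exact ⟨u, hu, hadj⟩
      · left; simp [hC₀, hu]
    · by_cases hv : v ∈ S₀
      · left
        refine Finset.mem_union_right _ ?_
        simp only [Finset.mem_map, Function.Embedding.coeFn_mk]
        refine ⟨u, ?_, rfl⟩
        simp only [nbhdSet, Finset.mem_filter, Finset.mem_univ, true_and]
        exact ⟨v, hv, (hadj : G.Adj u v).symm⟩
      · right; simp [hC₀, hv]
    · exact absurd hadj (by simp [splittingGraph])
  have hC₀card : C₀.card = (n - S₀.card) + (nbhdSet G S₀).card := by
    rw [hC₀, Finset.card_union_of_disjoint, Finset.card_map, Finset.card_map,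
      Finset.card_sdiff_of_subset (Finset.subset_univ S₀), Finset.card_univ]
    · simp [Finset.disjoint_left]
  have hle : (coverNum (splittingGraph G) : ℤ) ≤ (n : ℤ) - betaStar G := by
    have h1 : coverNum (splittingGraph G) ≤ C₀.card :=
      Nat.sInf_le ⟨C₀, hC₀cover, rfl⟩
    have h2 : (C₀.card : ℤ) = (n : ℤ) - betaStar G := by
      rw [hC₀card, hbeta, hS₀eq]
      push_cast [Nat.cast_sub hS₀card]
      ring
    calc (coverNum (splittingGraph G) : ℤ) ≤ (C₀.card : ℤ) := by exact_mod_cast h1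
      _ = (n : ℤ) - betaStar G := h2
  -- lower bound
  have hcovne : {k : ℕ | ∃ C : Finset (V ⊕ V), IsVertexCover (splittingGraph G) C ∧ C.card = k}.Nonempty := by
    exact ⟨(Finset.univ : Finset (V ⊕ V)).card, Finset.univ,
      fun u v _ => Or.inl (Finset.mem_univ u), rfl⟩
  obtain ⟨C, hCcover, hCcard⟩ := Nat.sInf_mem hcovne
  set A : Finset V := Finset.univ.filter (fun v => Sum.inl v ∉ C) with hA
  set B : Finset V := Finset.univ.filter (fun v => Sum.inr v ∉ C) with hB
  have hAind : IsIndepFinset G A := by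
    intro u hu v hv hadj
    rcases hCcover (Sum.inl u) (Sum.inl v) hadj with h | h
    · exact (Finset.mem_filter.mp hu).2 h
    · exact (Finset.mem_filter.mp hv).2 h
  have hNB : ∀ v ∈ nbhdSet G A, v ∉ B := by
    intro v hv hvB
    simp only [nbhdSet, Finset.mem_filter, Finset.mem_univ, true_and] at hv
    obtain ⟨u, hu, hadj⟩ := hv
    rcases hCcover (Sum.inl u) (Sum.inr v) hadj with h | h
    · exact (Finset.mem_filter.mp hu).2 h
    · exact (Finset.mem_filter.mp hvB).2 h
  have hNcard : (nbhdSet G A).card ≤ n - B.card := by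
    have hsub : nbhdSet G A ⊆ Finset.univ \ B := by
      intro v hv
      exact Finset.mem_sdiff.mpr ⟨Finset.mem_univ v, hNB v hv⟩
    calc (nbhdSet G A).card ≤ (Finset.univ \ B).card := Finset.card_le_card hsub
      _ = n - B.card := by rw [Finset.card_sdiff_of_subset (Finset.subset_univ B), Finset.card_univ]
  have hBcard : B.card ≤ n := Finset.card_le_card (Finset.subset_univ B)
  -- card of C
  have hCL : (Finset.univ.filter (fun v => Sum.inl v ∈ C)).card + A.card = n := by
    rw [hA]
    exact Finset.card_filter_add_card_filter_not (fun v => Sum.inl v ∈ C)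
  have hCR : (Finset.univ.filter (fun v => Sum.inr v ∈ C)).card + B.card = n := by
    rw [hB]
    exact Finset.card_filter_add_card_filter_not (fun v => Sum.inr v ∈ C)
  have hCsplit : C.toLeft.card + C.toRight.card = C.card :=
    Finset.card_toLeft_add_card_toRight (u := C)
  have hL : C.toLeft = Finset.univ.filter (fun v => Sum.inl v ∈ C) := by
    ext v; simp [Finset.mem_toLeft]
  have hR : C.toRight = Finset.univ.filter (fun v => Sum.inr v ∈ C) := by
    ext v; simp [Finset.mem_toRight]
  have hCtot : (Finset.univ.filter (fun v => Sum.inl v ∈ C)).card +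
      (Finset.univ.filter (fun v => Sum.inr v ∈ C)).card = C.card := by
    rw [← hL, ← hR]; exact hCsplit
  have hge : (n : ℤ) - betaStar G ≤ (coverNum (splittingGraph G) : ℤ) := by
    have hmemA : ((A.card : ℤ) - ((nbhdSet G A).card : ℤ)) ∈ K := ⟨A, hAind, rfl⟩
    have h1 : (A.card : ℤ) - ((nbhdSet G A).card : ℤ) ≤ betaStar G := by
      rw [hbeta]
      exact le_csSup hfin.bddAbove hmemA
    have h2 : ((nbhdSet G A).card : ℤ) ≤ (n : ℤ) - (B.card : ℤ) := by
      have := hNcard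
      omega
    have h3 : ((Finset.univ.filter (fun v => Sum.inl v ∈ C)).card : ℤ) +
        ((Finset.univ.filter (fun v => Sum.inr v ∈ C)).card : ℤ) = (C.card : ℤ) := by
      exact_mod_cast hCtot
    have h4 : ((Finset.univ.filter (fun v => Sum.inl v ∈ C)).card : ℤ) + (A.card : ℤ) = (n : ℤ) := by
      exact_mod_cast hCL
    have h5 : ((Finset.univ.filter (fun v => Sum.inr v ∈ C)).card : ℤ) + (B.card : ℤ) = (n : ℤ) := by
      exact_mod_cast hCR
    have h6 : (C.card : ℤ) = (coverNum (splittingGraph G) : ℤ) := by exact_mod_cast hCcard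
    linarith
  omega
end

section
/- Let G = (V,E) be a finite simple connected graph of order n ≥ 2. Then n ≤ β₀(S(G)) ≤ 2n − 2. -/
theorem stmt5 {V : Type*} [Fintype V] (G : SimpleGraph V)
    (hconn : G.Connected) (hn : 2 ≤ Fintype.card V) :
    Fintype.card V ≤ indepNum (splittingGraph G) ∧
      indepNum (splittingGraph G) ≤ 2 * Fintype.card V - 2 := by
  classical
  have hcard : Fintype.card (V ⊕ V) = 2 * Fintype.card V := by
    simp [Fintype.card_sum, two_mul]
  obtain ⟨u, v, huv⟩ : ∃ u v, G.Adj u v := by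
    obtain ⟨u, v, hne⟩ := Fintype.exists_pair_of_one_lt_card hn
    obtain ⟨w⟩ := hconn.preconnected u v
    cases w with
    | nil => exact absurd rfl hne
    | cons h p => exact ⟨_, _, h⟩
  constructor
  · have h1 : IsIndepFinset (splittingGraph G) (Finset.univ.image Sum.inr) := by
      intro a ha b hb
      simp only [Finset.mem_image] at ha hb
      obtain ⟨x, _, rfl⟩ := ha
      obtain ⟨y, _, rfl⟩ := hb
      exact fun h => h
    have hbdd : BddAbove {k : ℕ | ∃ S : Finset (V ⊕ V),
        IsIndepFinset (splittingGraph G) S ∧ S.card = k} := by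
      refine ⟨Fintype.card (V ⊕ V), ?_⟩
      rintro k ⟨S, _, rfl⟩
      exact S.card_le_univ.trans_eq (by simp)
    have hle := le_csSup hbdd ⟨_, h1, rfl⟩
    calc Fintype.card V = (Finset.univ.image (Sum.inr : V → V ⊕ V)).card := by
          rw [Finset.card_image_of_injective _ Sum.inr_injective, Finset.card_univ]
      _ ≤ _ := hle
  · apply csSup_le'
    rintro k ⟨S, hS, rfl⟩
    obtain ⟨x, y, hxy, hx, hy⟩ : ∃ x y : V ⊕ V, x ≠ y ∧ x ∉ S ∧ y ∉ S := by
      by_cases h1 : Sum.inl u ∈ S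
      · refine ⟨Sum.inl v, Sum.inr v, by simp, ?_, ?_⟩
        · intro h; exact hS _ h1 _ h huv
        · intro h; exact hS _ h1 _ h huv
      · by_cases h2 : Sum.inl v ∈ S
        · refine ⟨Sum.inl u, Sum.inr u, by simp, h1, ?_⟩
          intro h; exact hS _ h2 _ h huv.symm
        · exact ⟨Sum.inl u, Sum.inl v, by simp [huv.ne], h1, h2⟩
    have hsub : S ⊆ Finset.univ \ {x, y} := by
      intro a ha
      simp only [Finset.mem_sdiff, Finset.mem_univ, true_and, Finset.mem_insert,
        Finset.mem_singleton]
      rintro (rfl | rfl)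
      · exact hx ha
      · exact hy ha
    calc S.card ≤ (Finset.univ \ ({x, y} : Finset (V ⊕ V))).card := Finset.card_le_card hsub
      _ = Fintype.card (V ⊕ V) - 2 := by
          rw [Finset.card_sdiff_of_subset (by simp), Finset.card_univ, Finset.card_pair hxy]
      _ = 2 * Fintype.card V - 2 := by rw [hcard]
end
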